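/- Let τ be a complex measure supported on the interval (−1,1) ⊂ ℝ with |τ((−1,1))| ≥ 1 and ∫|x|^j d|τ|(x) < ∞ for j = 1, …, n. Then there exist points ξ₁, …, ξₙ ∈ ℂ such that for every j ∈ {1, …, n}, (1/τ((−1,1)))·∫ x^j dτ(x) = (1/n)·Σ_{k=1}^n ξ_k^j. Moreover, the points ξ₁, …, ξₙ lie in a disk D(0, C) for some constant C depending only on n and |τ|((−1,1)). -/

import Mathlib

open MeasureTheory Finset Polynomial



noncomputable def eAux (p : ℕ → ℂ) : ℕ → ℂ
  | 0 => 1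
  | (k+1) => (-1:ℂ)^k / (k+1) *
      (p (k+1) + ∑ i : Fin (k+1), if (i:ℕ) = 0 then 0
        else (-1:ℂ)^(i:ℕ) * eAux p i * p (k+1-(i:ℕ)))
  termination_by k => k
  decreasing_by exact i.isLt

lemma filter_antidiagonal_sum (m : ℕ) (f : ℕ×ℕ → ℂ) :
    ∑ a ∈ (Finset.HasAntidiagonal.antidiagonal (m+1)).filter (fun a => a.1 ∈ Set.Ioo 0 (m+1)), f a
      = ∑ i : Fin (m+1), if (i:ℕ) = 0 then 0 else f (i, m+1-(i:ℕ)) := by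
  rw [Finset.sum_filter, Finset.Nat.sum_antidiagonal_eq_sum_range_succ_mk,
    Finset.sum_range_succ, Fin.sum_univ_eq_sum_range (fun i => if i = 0 then 0 else f (i, m+1-i))]
  simp only [Set.mem_Ioo]
  rw [if_neg (by simp), add_zero]
  refine Finset.sum_congr rfl fun i hi => ?_
  rw [Finset.mem_range] at hi
  by_cases h0 : i = 0
  · simp [h0]
  · rw [if_pos ⟨Nat.pos_of_ne_zero h0, hi⟩, if_neg h0]

lemma newton_eAux (p : ℕ → ℂ) (k : ℕ) (hk : 0 < k) :
    p k = (-1:ℂ)^(k+1) * (k:ℂ) * eAux p k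
      - ∑ a ∈ (Finset.HasAntidiagonal.antidiagonal k).filter (fun a => a.1 ∈ Set.Ioo 0 k),
          (-1:ℂ)^a.1 * eAux p a.1 * p a.2 := by
  obtain ⟨m, rfl⟩ := Nat.exists_eq_add_of_lt hk
  rw [zero_add] at *
  rw [filter_antidiagonal_sum m (fun a => (-1:ℂ)^a.1 * eAux p a.1 * p a.2)]
  rw [eAux]
  have hne : ((m:ℂ)+1) ≠ 0 := Nat.cast_add_one_ne_zero m
  have hsign : (-1:ℂ)^(m+1+1) = (-1:ℂ)^m := by rw [pow_succ, pow_succ]; ring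
  rw [hsign]
  push_cast
  generalize (∑ i : Fin (m+1), if (i:ℕ) = 0 then (0:ℂ)
        else (-1:ℂ)^(i:ℕ) * eAux p i * p (m+1-(i:ℕ))) = s
  have h2 : (-1:ℂ)^(m*2) = 1 := by rw [show m*2 = 2*m from by ring, pow_mul]; norm_num
  field_simp
  ring_nf
  rw [h2]
  ring

lemma newton_eval (n : ℕ) (ξ : Fin n → ℂ) (k : ℕ) (hk : 0 < k) :
    (∑ i, ξ i ^ k) = (-1:ℂ)^(k+1) * k * (Finset.univ.val.map ξ).esymm k
      - ∑ a ∈ (Finset.HasAntidiagonal.antidiagonal k).filter (fun a => a.1 ∈ Set.Ioo 0 k),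
          (-1:ℂ)^a.1 * (Finset.univ.val.map ξ).esymm a.1 * (∑ i, ξ i ^ a.2) := by
  have h := congrArg (MvPolynomial.eval ξ) (MvPolynomial.psum_eq_mul_esymm_sub_sum (Fin n) ℂ k hk)
  have he : ∀ j : ℕ, MvPolynomial.eval ξ (MvPolynomial.esymm (Fin n) ℂ j)
      = (Finset.univ.val.map ξ).esymm j := by
    intro j
    rw [← MvPolynomial.aeval_esymm_eq_multiset_esymm (Fin n) ℂ j ξ]
    rw [MvPolynomial.aeval_def, Algebra.algebraMap_self]; rfl
  have hp : ∀ j : ℕ, MvPolynomial.eval ξ (MvPolynomial.psum (Fin n) ℂ j) = ∑ i, ξ i ^ j := by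
    intro j; simp [MvPolynomial.psum]
  simpa [he, hp] using h

lemma list_ofFn_get {α : Type*} (l : List α) (n : ℕ) (h : l.length = n) :
    List.ofFn (fun i : Fin n => l.get (Fin.cast h.symm i)) = l := by
  subst h; simp

lemma exists_tuple (n : ℕ) (hn : 0 < n) (e : ℕ → ℂ) :
    ∃ ξ : Fin n → ℂ,
      (∀ j : ℕ, 1 ≤ j → j ≤ n → (Finset.univ.val.map ξ).esymm j = e j) ∧
      (∀ k : Fin n, (ξ k)^n + ∑ j ∈ Finset.range n, ((-1:ℂ)^(n-j) * e (n-j)) * (ξ k)^j = 0) := by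
  set r : ℂ[X] := ∑ j ∈ Finset.range n, C ((-1:ℂ)^(n-j) * e (n-j)) * X^j with hr
  set q : ℂ[X] := X^n + r with hq
  have hrdeg : r.degree < (n : WithBot ℕ) := by
    refine lt_of_le_of_lt (Polynomial.degree_sum_le _ _)
      ((Finset.sup_lt_iff (WithBot.bot_lt_coe n)).mpr fun j hj => ?_)
    exact lt_of_le_of_lt (Polynomial.degree_C_mul_X_pow_le _ _)
      (by exact_mod_cast Nat.cast_lt.mpr (Finset.mem_range.mp hj) : (j:WithBot ℕ) < (n:WithBot ℕ))
  have hmonic : q.Monic := Polynomial.monic_X_pow_add hrdeg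
  have hdeg : q.degree = n := by
    rw [hq, Polynomial.degree_add_eq_left_of_degree_lt (by rwa [Polynomial.degree_X_pow]),
      Polynomial.degree_X_pow]
  have hnatdeg : q.natDegree = n := Polynomial.natDegree_eq_of_degree_eq_some hdeg
  have hcoeff : ∀ k : ℕ, k < n → q.coeff k = (-1:ℂ)^(n-k) * e (n-k) := by
    intro k hk
    rw [hq, Polynomial.coeff_add, Polynomial.coeff_X_pow, if_neg (Nat.ne_of_lt hk), zero_add, hr,
      Polynomial.finset_sum_coeff]
    simp only [Polynomial.coeff_C_mul_X_pow]
    rw [Finset.sum_ite_eq (Finset.range n) k (fun j => (-1:ℂ)^(n-j) * e (n-j)),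
      if_pos (Finset.mem_range.mpr hk)]
  have hcard' : Multiset.card q.roots = q.natDegree :=
    (Polynomial.splits_iff_card_roots).mp (IsAlgClosed.splits q)
  have hcard : Multiset.card q.roots = n := by rw [hcard', hnatdeg]
  have hlen : q.roots.toList.length = n := by rw [Multiset.length_toList, hcard]
  refine ⟨fun i => q.roots.toList.get (Fin.cast hlen.symm i), ?_, ?_⟩
  · have hmap : Finset.univ.val.map (fun i : Fin n => q.roots.toList.get (Fin.cast hlen.symm i))
        = q.roots := by
      rw [Fin.univ_val_map, list_ofFn_get q.roots.toList n hlen, Multiset.coe_toList]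
    intro j hj1 hjn
    have h1 := Polynomial.coeff_eq_esymm_roots_of_card hcard' (k := n - j)
      (by rw [hnatdeg]; omega)
    rw [hmonic.leadingCoeff, one_mul, hnatdeg, hcoeff (n-j) (by omega),
      show n - (n - j) = j by omega] at h1
    rw [hmap]
    exact mul_left_cancel₀ (pow_ne_zero j (by norm_num : (-1:ℂ) ≠ 0)) h1.symm
  · intro k
    set z := q.roots.toList.get (Fin.cast hlen.symm k) with hz
    have hmem : z ∈ q.roots := by
      rw [← Multiset.mem_toList]; exact List.get_mem _ _
    have hroot := Polynomial.isRoot_of_mem_roots hmem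
    have heval : Polynomial.eval z q
        = z^n + ∑ j ∈ Finset.range n, ((-1:ℂ)^(n-j) * e (n-j)) * z^j := by
      rw [hq, hr]
      simp [Polynomial.eval_finset_sum]
    show z ^ n + _ = 0
    rw [← heval]
    exact hroot

lemma root_bound (n : ℕ) (hn : 0 < n) (c : ℕ → ℂ) (z : ℂ)
    (hz : z^n + ∑ j ∈ Finset.range n, c j * z^j = 0) :
    ‖z‖ ≤ max 1 (∑ j ∈ Finset.range n, ‖c j‖) := by
  rcases le_or_gt ‖z‖ 1 with h1 | h1
  · exact le_trans h1 (le_max_left _ _)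
  refine le_trans ?_ (le_max_right _ _)
  have hzn : z^n = -∑ j ∈ Finset.range n, c j * z^j := by linear_combination hz
  have hnorm : ‖z‖^n ≤ (∑ j ∈ Finset.range n, ‖c j‖) * ‖z‖^(n-1) := by
    calc ‖z‖^n = ‖z^n‖ := by rw [norm_pow]
    _ = ‖∑ j ∈ Finset.range n, c j * z^j‖ := by rw [hzn, norm_neg]
    _ ≤ ∑ j ∈ Finset.range n, ‖c j * z^j‖ := norm_sum_le _ _
    _ ≤ ∑ j ∈ Finset.range n, ‖c j‖ * ‖z‖^(n-1) := by
        refine Finset.sum_le_sum fun j hj => ?_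
        have hj' := Finset.mem_range.mp hj
        rw [norm_mul, norm_pow]
        exact mul_le_mul_of_nonneg_left
          (pow_le_pow_right₀ (le_of_lt h1) (by omega : j ≤ n - 1)) (norm_nonneg _)
    _ = _ := by rw [← Finset.sum_mul]
  have hpos : (0:ℝ) < ‖z‖^(n-1) := pow_pos (lt_trans one_pos h1) _
  have : ‖z‖ * ‖z‖^(n-1) ≤ (∑ j ∈ Finset.range n, ‖c j‖) * ‖z‖^(n-1) := by
    rw [← pow_succ']
    rwa [show n - 1 + 1 = n by omega]
  exact le_of_mul_le_mul_right this hpos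

lemma eAux_bound (p : ℕ → ℂ) (n : ℕ) (M : ℝ) (hM : 0 ≤ M)
    (hp : ∀ j : ℕ, 1 ≤ j → j ≤ n → ‖p j‖ ≤ n * M) :
    ∀ k : ℕ, k ≤ n → ‖eAux p k‖ ≤ (1 + (n:ℝ)*M)^k := by
  intro k
  induction k using Nat.strong_induction_on with
  | _ k ih =>
    match k with
    | 0 => intro _; simp [eAux]
    | (m+1) =>
      intro hkn
      set A : ℝ := 1 + (n:ℝ)*M with hA
      have hnM : 0 ≤ (n:ℝ)*M := mul_nonneg (Nat.cast_nonneg n) hM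
      have hA1 : 1 ≤ A := le_add_of_nonneg_right hnM
      have hA0 : 0 ≤ A := le_trans zero_le_one hA1
      rw [eAux, norm_mul]
      have hpre : ‖(-1:ℂ)^m / ((m:ℂ)+1)‖ = 1/((m:ℝ)+1) := by
        rw [norm_div, norm_pow, norm_neg, norm_one, one_pow]
        congr 1
        rw [show ((m:ℂ)+1) = ((m+1:ℕ):ℂ) by push_cast; ring, Complex.norm_natCast]
        push_cast; ring
      rw [hpre]
      have h2 : ‖∑ i : Fin (m+1), if (i:ℕ) = 0 then (0:ℂ)
            else (-1:ℂ)^(i:ℕ) * eAux p i * p (m+1-(i:ℕ))‖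
          ≤ ∑ i ∈ Finset.range (m+1), (if i = 0 then 0 else A^i * ((n:ℝ)*M)) := by
        refine le_trans (norm_sum_le _ _) ?_
        rw [Fin.sum_univ_eq_sum_range (fun i => ‖if i = 0 then (0:ℂ)
            else (-1:ℂ)^i * eAux p i * p (m+1-i)‖)]
        refine Finset.sum_le_sum fun i hi => ?_
        have hi' := Finset.mem_range.mp hi
        by_cases h0 : i = 0
        · simp [h0]
        · rw [if_neg h0, if_neg h0, norm_mul, norm_mul, norm_pow, norm_neg, norm_one,
            one_pow, one_mul]
          exact mul_le_mul (ih i hi' (by omega)) (hp (m+1-i) (by omega) (by omega))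
            (norm_nonneg _) (pow_nonneg hA0 _)
      have key : ∑ i ∈ Finset.range (m+1), (if i = 0 then 0 else A^i * ((n:ℝ)*M))
          = A^(m+1) - 1 - (n:ℝ)*M := by
        have hsplit : ∀ i : ℕ, (if i = 0 then 0 else A^i * ((n:ℝ)*M))
            = A^i * ((n:ℝ)*M) - (if i = 0 then (n:ℝ)*M else 0) := by
          intro i; by_cases h0 : i = 0 <;> simp [h0]
        simp only [hsplit]
        rw [Finset.sum_sub_distrib, Finset.sum_ite_eq' (Finset.range (m+1)) 0 (fun _ => (n:ℝ)*M),
          if_pos (Finset.mem_range.mpr (Nat.succ_pos m)), ← Finset.sum_mul,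
          show (n:ℝ)*M = A - 1 by rw [hA]; ring, geom_sum_mul]
      have hbound : ‖p (m+1) + ∑ i : Fin (m+1), if (i:ℕ) = 0 then (0:ℂ)
            else (-1:ℂ)^(i:ℕ) * eAux p i * p (m+1-(i:ℕ))‖ ≤ A^(m+1) - 1 := by
        refine le_trans (norm_add_le _ _) ?_
        have h1 : ‖p (m+1)‖ ≤ (n:ℝ)*M := hp (m+1) (by omega) hkn
        calc ‖p (m+1)‖ + _ ≤ (n:ℝ)*M + (A^(m+1) - 1 - (n:ℝ)*M) := add_le_add h1 (key ▸ h2)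
        _ = A^(m+1) - 1 := by ring
      calc 1/((m:ℝ)+1) * ‖_ + _‖ ≤ 1 * (A^(m+1) - 1) := by
            refine mul_le_mul ?_ hbound (norm_nonneg _) zero_le_one
            rw [div_le_one (by positivity)]
            linarith [Nat.cast_nonneg (α := ℝ) m]
      _ ≤ A^(m+1) := by nlinarith [one_le_pow₀ hA1 (n := m+1)]

/-- Lemma (Ortega-Cerdà): given a complex measure `dτ = f dν` (polar
decomposition, with `ν = |τ|` a finite measure supported in `(-1,1)` and
`‖f‖ = 1` ν-a.e.) with `|τ((-1,1))| ≥ 1`, there are points `ξ₁, …, ξₙ ∈ ℂ`,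
lying in a disk `D(0, C)` with `C` depending only on `n` and `|τ|((-1,1))`,
such that `(1/τ((-1,1))) ∫ x^j dτ = (1/n) Σ ξ_k^j` for `j = 1, …, n`. -/
theorem stmt5 (n : ℕ) (hn : 0 < n) :
    ∃ C : ℝ → ℝ, ∀ (ν : Measure ℝ) (_ : IsFiniteMeasure ν)
      (f : ℝ → ℂ),
      ν (Set.Ioo (-1) 1)ᶜ = 0 →
      (∀ᵐ x ∂ν, ‖f x‖ = 1) →
      AEStronglyMeasurable f ν →
      1 ≤ ‖∫ x, f x ∂ν‖ →
      (∀ j : ℕ, 1 ≤ j → j ≤ n → Integrable (fun x : ℝ => |x|^j) ν) →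
      ∃ ξ : Fin n → ℂ,
        (∀ j : ℕ, 1 ≤ j → j ≤ n →
          (∫ x, (x:ℂ)^j * f x ∂ν) / (∫ x, f x ∂ν)
            = (1/(n:ℂ)) * ∑ k : Fin n, (ξ k)^j) ∧
        (∀ k : Fin n, ‖ξ k‖ ≤ C ((ν Set.univ).toReal)) := by
  refine ⟨fun M => max 1 ((n:ℝ) * (1 + (n:ℝ)*M)^n), ?_⟩
  intro ν hfin f hsupp hf1 hmeas hI hint
  set M : ℝ := (ν Set.univ).toReal with hMdef
  have hM0 : 0 ≤ M := ENNReal.toReal_nonneg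
  set If : ℂ := ∫ x, f x ∂ν with hIfdef
  have hIfne : If ≠ 0 := by
    intro h; rw [h] at hI; simp at hI; linarith
  set p : ℕ → ℂ := fun j => (n:ℂ) * ((∫ x, (x:ℂ)^j * f x ∂ν) / If) with hpdef
  have hae : ∀ᵐ x ∂ν, x ∈ Set.Ioo (-1:ℝ) 1 := hsupp
  -- bound on the moments
  have hp : ∀ j : ℕ, 1 ≤ j → j ≤ n → ‖p j‖ ≤ n * M := by
    intro j hj1 hjn
    have hmeas2 : AEStronglyMeasurable (fun x : ℝ => (x:ℂ)^j * f x) ν :=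
      ((Complex.continuous_ofReal.pow j).aestronglyMeasurable).mul hmeas
    have hintf : Integrable (fun x : ℝ => (x:ℂ)^j * f x) ν := by
      refine (hint j hj1 hjn).mono' hmeas2 ?_
      filter_upwards [hf1] with x hx
      rw [norm_mul, norm_pow, Complex.norm_real, hx, mul_one]
      exact le_refl _
    have hIbound : ‖∫ x, (x:ℂ)^j * f x ∂ν‖ ≤ M := by
      calc ‖∫ x, (x:ℂ)^j * f x ∂ν‖ ≤ ∫ x, ‖(x:ℂ)^j * f x‖ ∂ν :=
            norm_integral_le_integral_norm _
      _ ≤ ∫ x, (1:ℝ) ∂ν := by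
          refine integral_mono_ae hintf.norm (integrable_const 1) ?_
          filter_upwards [hf1, hae] with x hx hxm
          rw [norm_mul, norm_pow, Complex.norm_real, hx, mul_one]
          have hx1 : |x| ≤ 1 := by
            rw [abs_le]; constructor <;> [linarith [hxm.1]; linarith [hxm.2]]
          calc ‖x‖^j = |x|^j := rfl
          _ ≤ 1^j := pow_le_pow_left₀ (abs_nonneg x) hx1 j
          _ = 1 := one_pow j
      _ = M := by simp [hMdef, measureReal_def]
    have hnormp : ‖p j‖ = (n:ℝ) * (‖∫ x, (x:ℂ)^j * f x ∂ν‖ / ‖If‖) := by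
      rw [hpdef]
      simp [norm_mul, norm_div]
    rw [hnormp]
    refine mul_le_mul_of_nonneg_left ?_ (Nat.cast_nonneg n)
    exact le_trans (div_le_self (norm_nonneg _) hI) hIbound
  -- build the points
  obtain ⟨ξ, hesymm, hroots⟩ := exists_tuple n hn (eAux p)
  have hpsum : ∀ j : ℕ, 1 ≤ j → j ≤ n → (∑ i, ξ i ^ j) = p j := by
    intro j
    induction j using Nat.strong_induction_on with
    | _ j ih =>
      intro hj1 hjn
      rw [newton_eval n ξ j (by omega), newton_eAux p j (by omega)]
      congr 1
      · rw [hesymm j hj1 hjn]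
      · refine Finset.sum_congr rfl fun a ha => ?_
        obtain ⟨ha1, ha2⟩ := Finset.mem_filter.mp ha
        have hadd : a.1 + a.2 = j := Finset.HasAntidiagonal.mem_antidiagonal.mp ha1
        obtain ⟨hA1, hA2⟩ := ha2
        rw [hesymm a.1 hA1 (le_trans (le_of_lt hA2) hjn),
          ih a.2 (by omega) (by omega) (by omega)]
  refine ⟨ξ, ?_, ?_⟩
  · intro j hj1 hjn
    have h := hpsum j hj1 hjn
    simp only [hpdef] at h
    rw [h, ← mul_assoc, one_div, inv_mul_cancel₀ (by exact_mod_cast hn.ne' : (n:ℂ) ≠ 0), one_mul]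
  · intro k
    have hb := root_bound n hn (fun j => (-1:ℂ)^(n-j) * eAux p (n-j)) (ξ k) (hroots k)
    refine le_trans hb (max_le_max le_rfl ?_)
    have hA1 : 1 ≤ 1 + (n:ℝ)*M := le_add_of_nonneg_right (mul_nonneg (Nat.cast_nonneg n) hM0)
    calc ∑ j ∈ Finset.range n, ‖(-1:ℂ)^(n-j) * eAux p (n-j)‖
        ≤ ∑ _j ∈ Finset.range n, (1 + (n:ℝ)*M)^n := by
          refine Finset.sum_le_sum fun j hj => ?_
          rw [norm_mul, norm_pow, norm_neg, norm_one, one_pow, one_mul]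
          exact le_trans (eAux_bound p n M hM0 hp (n-j) (by omega))
            (pow_le_pow_right₀ hA1 (by omega))
    _ = (n:ℝ) * (1 + (n:ℝ)*M)^n := by
        rw [Finset.sum_const, Finset.card_range, nsmul_eq_mul]
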